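/- Let L: ℝ^{m×n} → ℝ be differentiable and μ-strongly convex (μ > 0) with minimizer W*. Fix W_pt ∈ ℝ^{m×n} and ε ∈ [0,1). Let A: [0,∞) → ℝ^{r×n} and B: [0,∞) → ℝ^{m×r} be differentiable curves with A(t)A(t)ᵀ and B(t)ᵀB(t) positive definite for all t ≥ 0, set W(t) := W_pt + B(t)A(t), and suppose that for all t ≥ 0: (i) the derivative of W satisfies W′(t) = −∇L(W(t)) + P_{B(t)}^null · ∇L(W(t)) · P_{A(t)}^null, and (ii) ⟨P_{B(t)}^null · ∇L(W(t)) · P_{A(t)}^null, W(t) − W*⟩ ≤ ε · ⟨∇L(W(t)), W(t) − W*⟩. Then for all t ≥ 0, ‖W(t) − W*‖_F² ≤ exp(−μ(1−ε)t) · ‖W(0) − W*‖_F². -/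

import Mathlib

open Matrix

/-- Frobenius norm of a real matrix. -/
noncomputable def frobNorm {m n : ℕ} (A : Matrix (Fin m) (Fin n) ℝ) : ℝ :=
  Real.sqrt (∑ i, ∑ j, (A i j) ^ 2)

/-- Frobenius (trace) inner product of two real matrices. -/
def frobInner {m n : ℕ} (A B : Matrix (Fin m) (Fin n) ℝ) : ℝ :=
  ∑ i, ∑ j, A i j * B i j

/-- Linear convergence of the continuous-time ODELoRA flow under μ-strong
convexity and the ε-dominance condition on the projected gradient term. -/
theorem odelora_flow_linear_convergence {m n r : ℕ}
    (L : Matrix (Fin m) (Fin n) ℝ → ℝ)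
    (gradL : Matrix (Fin m) (Fin n) ℝ → Matrix (Fin m) (Fin n) ℝ)
    -- `gradL` is the gradient of the differentiable function `L`
    (hgrad : ∀ (W Δ : Matrix (Fin m) (Fin n) ℝ),
      HasDerivAt (fun t : ℝ => L (W + t • Δ)) (frobInner (gradL W) Δ) 0)
    (μ : ℝ) (hμ : 0 < μ)
    -- μ-strong convexity of `L`
    (hsc : ∀ W W' : Matrix (Fin m) (Fin n) ℝ,
      L W' + frobInner (gradL W') (W - W') + μ / 2 * frobNorm (W - W') ^ 2 ≤ L W)
    (Wstar : Matrix (Fin m) (Fin n) ℝ) (hmin : ∀ W, L Wstar ≤ L W)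
    (Wpt : Matrix (Fin m) (Fin n) ℝ)
    (ε : ℝ) (hε0 : 0 ≤ ε) (hε1 : ε < 1)
    (A : ℝ → Matrix (Fin r) (Fin n) ℝ) (B : ℝ → Matrix (Fin m) (Fin r) ℝ)
    -- the curves are differentiable on [0, ∞)
    (hdiffA : ∀ t ≥ (0:ℝ), ∀ i j,
      DifferentiableWithinAt ℝ (fun s => A s i j) (Set.Ici (0:ℝ)) t)
    (hdiffB : ∀ t ≥ (0:ℝ), ∀ i j,
      DifferentiableWithinAt ℝ (fun s => B s i j) (Set.Ici (0:ℝ)) t)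
    (hposA : ∀ t ≥ (0:ℝ), (A t * (A t)ᵀ).PosDef)
    (hposB : ∀ t ≥ (0:ℝ), ((B t)ᵀ * B t).PosDef)
    (W : ℝ → Matrix (Fin m) (Fin n) ℝ)
    (hW : ∀ t, W t = Wpt + B t * A t)
    -- (i) the ODELoRA dynamics of the full matrix
    (hode : ∀ t ≥ (0:ℝ), ∀ i j,
      HasDerivWithinAt (fun s => W s i j)
        ((-(gradL (W t)) +
          ((1 : Matrix (Fin m) (Fin m) ℝ) - B t * ((B t)ᵀ * B t)⁻¹ * (B t)ᵀ) *
            gradL (W t) *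
          ((1 : Matrix (Fin n) (Fin n) ℝ) - (A t)ᵀ * (A t * (A t)ᵀ)⁻¹ * A t)) i j)
        (Set.Ici (0:ℝ)) t)
    -- (ii) the ε-dominance condition
    (hcond : ∀ t ≥ (0:ℝ),
      frobInner
        ((((1 : Matrix (Fin m) (Fin m) ℝ) - B t * ((B t)ᵀ * B t)⁻¹ * (B t)ᵀ) *
            gradL (W t) *
          ((1 : Matrix (Fin n) (Fin n) ℝ) - (A t)ᵀ * (A t * (A t)ᵀ)⁻¹ * A t)))
        (W t - Wstar)
        ≤ ε * frobInner (gradL (W t)) (W t - Wstar)) :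
    ∀ t ≥ (0:ℝ),
      frobNorm (W t - Wstar) ^ 2
        ≤ Real.exp (-(μ * (1 - ε) * t)) * frobNorm (W 0 - Wstar) ^ 2 := by
  intro t ht
  set c : ℝ := μ * (1 - ε) with hc
  have hcpos : 0 < c := mul_pos hμ (by linarith)
  set D : ℝ → Matrix (Fin m) (Fin n) ℝ := fun s =>
    -(gradL (W s)) +
      ((1 : Matrix (Fin m) (Fin m) ℝ) - B s * ((B s)ᵀ * B s)⁻¹ * (B s)ᵀ) * gradL (W s) *
      ((1 : Matrix (Fin n) (Fin n) ℝ) - (A s)ᵀ * (A s * (A s)ᵀ)⁻¹ * A s) with hD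
  set V : ℝ → ℝ := fun s => ∑ i, ∑ j, (W s i j - Wstar i j) ^ 2 with hVdef
  have hVnorm : ∀ s, frobNorm (W s - Wstar) ^ 2 = V s := by
    intro s
    simp only [frobNorm, hVdef]
    rw [Real.sq_sqrt (by positivity)]
    simp [Matrix.sub_apply]
  have hVnonneg : ∀ s, 0 ≤ V s := fun s => by
    apply Finset.sum_nonneg; intro i _; apply Finset.sum_nonneg; intro j _; positivity
  -- derivative of V
  have key : ∀ s ∈ Set.Ici (0:ℝ), HasDerivWithinAt V
      (2 * frobInner (D s) (W s - Wstar)) (Set.Ici 0) s := by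
    intro s hs
    have h1 : HasDerivWithinAt V
        (∑ i, ∑ j, (2:ℝ) * (W s i j - Wstar i j) ^ 1 * D s i j) (Set.Ici 0) s := by
      apply HasDerivWithinAt.fun_sum
      intro i _
      apply HasDerivWithinAt.fun_sum
      intro j _
      have := ((hode s hs i j).sub_const (Wstar i j)).fun_pow 2
      simp at this
      rw [pow_one]
      exact this
    have heq : 2 * frobInner (D s) (W s - Wstar)
        = ∑ i, ∑ j, (2:ℝ) * (W s i j - Wstar i j) ^ 1 * D s i j := by
      simp only [frobInner, Finset.mul_sum, Matrix.sub_apply, pow_one]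
      exact Finset.sum_congr rfl fun i _ => Finset.sum_congr rfl fun j _ => by ring
    rw [heq]; exact h1
  -- strong convexity lower bound on the inner product
  have hg : ∀ s, 0 ≤ s → μ / 2 * V s ≤ frobInner (gradL (W s)) (W s - Wstar) := by
    intro s hs
    have h1 := hsc Wstar (W s)
    have h2 := hmin (W s)
    have h3 : frobNorm (Wstar - W s) ^ 2 = V s := by
      simp only [frobNorm, hVdef]
      rw [Real.sq_sqrt (by positivity)]
      refine Finset.sum_congr rfl fun i _ => Finset.sum_congr rfl fun j _ => ?_
      simp [Matrix.sub_apply]; ring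
    have h4 : frobInner (gradL (W s)) (Wstar - W s)
        = - frobInner (gradL (W s)) (W s - Wstar) := by
      simp only [frobInner, Matrix.sub_apply, ← Finset.sum_neg_distrib]
      refine Finset.sum_congr rfl fun i _ => Finset.sum_congr rfl fun j _ => ?_
      ring
    rw [h3, h4] at h1
    linarith
  -- the differential inequality
  have hbound : ∀ s, 0 ≤ s → 2 * frobInner (D s) (W s - Wstar) ≤ -c * V s := by
    intro s hs
    have hsplit : frobInner (D s) (W s - Wstar)
        = - frobInner (gradL (W s)) (W s - Wstar)
          + frobInner
            ((((1 : Matrix (Fin m) (Fin m) ℝ) - B s * ((B s)ᵀ * B s)⁻¹ * (B s)ᵀ) *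
              gradL (W s) *
              ((1 : Matrix (Fin n) (Fin n) ℝ) - (A s)ᵀ * (A s * (A s)ᵀ)⁻¹ * A s)))
            (W s - Wstar) := by
      simp only [hD, frobInner, Matrix.add_apply, Matrix.neg_apply,
        ← Finset.sum_add_distrib, ← Finset.sum_neg_distrib]
      exact Finset.sum_congr rfl fun i _ => Finset.sum_congr rfl fun j _ => by ring
    have hc2 := hcond s hs
    have hg2 := hg s hs
    have : frobInner (D s) (W s - Wstar)
        ≤ (ε - 1) * frobInner (gradL (W s)) (W s - Wstar) := by
      rw [hsplit]; linarith
    have hfac : (ε - 1) * frobInner (gradL (W s)) (W s - Wstar)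
        ≤ (ε - 1) * (μ / 2 * V s) := by
      apply mul_le_mul_of_nonpos_left hg2 (by linarith)
    calc 2 * frobInner (D s) (W s - Wstar)
        ≤ 2 * ((ε - 1) * (μ / 2 * V s)) := by linarith
      _ = -c * V s := by rw [hc]; ring
  -- Gronwall via antitonicity of G s = exp (c s) * V s
  set G : ℝ → ℝ := fun s => Real.exp (c * s) * V s with hG
  have hGderiv : ∀ s ∈ Set.Ioi (0:ℝ), HasDerivAt G
      (Real.exp (c * s) * c * V s
        + Real.exp (c * s) * (2 * frobInner (D s) (W s - Wstar))) s := by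
    intro s hs
    have hV' : HasDerivAt V (2 * frobInner (D s) (W s - Wstar)) s :=
      (key s (Set.mem_Ici.mpr (le_of_lt (Set.mem_Ioi.mp hs)))).hasDerivAt (Ici_mem_nhds hs)
    have hexp : HasDerivAt (fun x => Real.exp (c * x)) (Real.exp (c * s) * c) s := by
      simpa using (((hasDerivAt_id s).const_mul c).exp)
    simpa using hexp.fun_mul hV'
  have hVcont : ContinuousOn V (Set.Ici 0) := fun s hs =>
    (key s hs).continuousWithinAt
  have hGcont : ContinuousOn G (Set.Ici 0) :=
    ((Real.continuous_exp.comp (continuous_const.mul continuous_id)).continuousOn).mul hVcont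
  have hanti : AntitoneOn G (Set.Ici 0) := by
    apply antitoneOn_of_deriv_nonpos (convex_Ici 0) hGcont
    · rw [interior_Ici]
      intro s hs
      exact (hGderiv s hs).differentiableAt.differentiableWithinAt
    · rw [interior_Ici]
      intro s hs
      rw [(hGderiv s hs).deriv]
      have hb := hbound s (le_of_lt hs)
      have hexpos : (0:ℝ) < Real.exp (c * s) := Real.exp_pos _
      nlinarith [hVnonneg s]
  have hGt : G t ≤ G 0 := hanti Set.self_mem_Ici ht ht
  have hG0 : G 0 = V 0 := by simp [hG]
  rw [hVnorm, hVnorm]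
  have hstep : Real.exp (c * t) * V t ≤ V 0 := by rw [← hG0]; exact hGt
  have hrw : Real.exp (-(μ * (1 - ε) * t)) = (Real.exp (c * t))⁻¹ := by
    rw [← hc, Real.exp_neg]
  have hexpos : (0:ℝ) < Real.exp (c * t) := Real.exp_pos _
  rw [hrw, inv_mul_eq_div, le_div_iff₀ hexpos]
  calc V t * Real.exp (c * t) = Real.exp (c * t) * V t := by ring
    _ ≤ V 0 := hstep
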